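/- Let p be a probability mass function on the positive integers and let X^{(1)}, ..., X^{(n)} be an i.i.d. sample from p. For each i, let m^{(i)} = #{k ≤ n : X^{(k)} = X^{(i)}} be the number of occurrences of the symbol X^{(i)} in the sample, and define the harmonic entropy estimator Ĥ(X_n) = (1/n) ∑_{i=1}^{n} [J(n−1) − J(m^{(i)} − 1)]. If the Shannon entropy H(X) = −∑_j p_j log p_j is finite, then E[Ĥ(X_n)] − H(X) = −∑_{k=n}^{∞} (1/k) E[(1 − p(X))^k] = −∑_{k=n}^{∞} (1/k) ∑_{j} p_j (1−p_j)^k. -/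

import Mathlib

/-- `J m` is the `m`-th harmonic number `∑_{k=1}^m 1/k`, with `J 0 = 0`. -/
noncomputable def J (m : ℕ) : ℝ := ∑ k ∈ Finset.range m, (1 : ℝ) / (k + 1)

/-- `mcount x i` is the number of occurrences `m⁽ⁱ⁾` of the symbol `x i` in the sample `x`. -/
def mcount {n : ℕ} (x : Fin n → ℕ+) (i : Fin n) : ℕ :=
  (Finset.univ.filter fun k => x k = x i).card

/-- The harmonic entropy estimator
`Ĥ(x) = (1/n) ∑_{i=1}^n [J(n−1) − J(m⁽ⁱ⁾ − 1)]`. -/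
noncomputable def Hhat {n : ℕ} (x : Fin n → ℕ+) : ℝ :=
  ((n : ℝ))⁻¹ * ∑ i, (J (n - 1) - J (mcount x i - 1))

/-- The probability that an i.i.d. sample of size `n` from the pmf `p` equals `x`. -/
noncomputable def Pn {n : ℕ} (p : ℕ+ → ℝ) (x : Fin n → ℕ+) : ℝ := ∏ i, p (x i)

/-- The expectation `E[Ĥ(X_n)]` of the harmonic entropy estimator over an i.i.d. sample
of size `n` from `p`. -/
noncomputable def EHhat (p : ℕ+ → ℝ) (n : ℕ) : ℝ := ∑' x : Fin n → ℕ+, Pn p x * Hhat x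

/-- The Shannon entropy `H(X) = −∑_j p_j log p_j` of the pmf `p`. -/
noncomputable def Hent (p : ℕ+ → ℝ) : ℝ := -∑' j : ℕ+, p j * Real.log (p j)

open scoped ENNReal
open Finset

/-! ### Auxiliary lemmas -/

section Aux

lemma J_succ (m : ℕ) : J (m + 1) = J m + 1 / (m + 1) := Finset.sum_range_succ _ _

lemma J_mono : Monotone J := by
  intro a b hab
  apply Finset.sum_le_sum_of_subset_of_nonneg (Finset.range_subset_range.2 hab)
  intro k _ _
  positivity

lemma binom_one (N : ℕ) (q : ℝ) :
    ∑ m ∈ range (N + 1), (N.choose m : ℝ) * q ^ m * (1 - q) ^ (N - m) = 1 := by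
  have h := (add_pow q (1 - q) N).symm
  calc ∑ m ∈ range (N + 1), (N.choose m : ℝ) * q ^ m * (1 - q) ^ (N - m)
      = ∑ m ∈ range (N + 1), q ^ m * (1 - q) ^ (N - m) * (N.choose m : ℝ) := by
        apply Finset.sum_congr rfl; intro m _; ring
    _ = (q + (1 - q)) ^ N := h
    _ = 1 := by norm_num

lemma idII (N : ℕ) (q : ℝ) :
    ∑ m ∈ range (N + 1), (N.choose m : ℝ) * q ^ (m + 1) * (1 - q) ^ (N - m) / (m + 1)
      = (1 - (1 - q) ^ (N + 1)) / (N + 1) := by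
  have hb : ∑ m ∈ range (N + 1), ((N + 1).choose (m + 1) : ℝ) * q ^ (m + 1) * (1 - q) ^ (N - m)
      = 1 - (1 - q) ^ (N + 1) := by
    have h1 := add_pow q (1 - q) (N + 1)
    simp only [add_sub_cancel, one_pow] at h1
    rw [Finset.sum_range_succ'] at h1
    simp only [pow_zero, Nat.choose_zero_right, Nat.cast_one, one_mul, mul_one,
      Nat.sub_zero] at h1
    have h2 : ∀ m ∈ range (N + 1),
        q ^ (m + 1) * (1 - q) ^ (N + 1 - (m + 1)) * ((N + 1).choose (m + 1) : ℝ)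
        = ((N + 1).choose (m + 1) : ℝ) * q ^ (m + 1) * (1 - q) ^ (N - m) := by
      intro m _
      rw [Nat.succ_sub_succ]
      ring
    rw [Finset.sum_congr rfl h2] at h1
    linarith [h1]
  rw [eq_div_iff (by positivity : ((N : ℝ) + 1) ≠ 0), ← hb, Finset.sum_mul]
  apply Finset.sum_congr rfl
  intro m _
  have hc : ((N : ℝ) + 1) * (N.choose m : ℝ) = ((N + 1).choose (m + 1) : ℝ) * ((m : ℝ) + 1) := by
    have := Nat.add_one_mul_choose_eq N m
    have h := congrArg (Nat.cast : ℕ → ℝ) this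
    push_cast at h
    linarith [h]
  have hm1 : ((m : ℝ) + 1) ≠ 0 := by positivity
  rw [div_mul_eq_mul_div, div_eq_iff hm1]
  linear_combination (q ^ (m + 1) * (1 - q) ^ (N - m)) * hc

lemma idI (q : ℝ) : ∀ N : ℕ,
    ∑ m ∈ range (N + 1), (N.choose m : ℝ) * q ^ m * (1 - q) ^ (N - m) * (J N - J m)
      = ∑ k ∈ range N, (1 - q) ^ (k + 1) / (k + 1) := by
  intro N
  induction N with
  | zero => simp
  | succ N ih =>
    set L := ∑ m ∈ range (N + 1), (N.choose m : ℝ) * q ^ m * (1 - q) ^ (N - m) * (J N - J m)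
      with hL
    have hA : ∑ m ∈ range (N + 1),
        (N.choose m : ℝ) * q ^ m * (1 - q) ^ (N + 1 - m) * (J (N + 1) - J m)
        = (1 - q) * L + (1 - q) / (N + 1) := by
      have e1 : ∀ m ∈ range (N + 1),
          (N.choose m : ℝ) * q ^ m * (1 - q) ^ (N + 1 - m) * (J (N + 1) - J m)
          = (1 - q) * ((N.choose m : ℝ) * q ^ m * (1 - q) ^ (N - m) * (J N - J m))
            + ((1 - q) / (N + 1)) * ((N.choose m : ℝ) * q ^ m * (1 - q) ^ (N - m)) := by
        intro m hm
        have hm' : m ≤ N := Nat.lt_succ_iff.1 (Finset.mem_range.1 hm)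
        have h2 : N + 1 - m = (N - m) + 1 := by omega
        rw [h2, pow_succ, J_succ]
        ring
      rw [Finset.sum_congr rfl e1, Finset.sum_add_distrib, ← Finset.mul_sum, ← Finset.mul_sum,
        binom_one, mul_one, hL]
    have hS1 : ∑ m ∈ range (N + 1),
        (N.choose m : ℝ) * q ^ (m + 1) * (1 - q) ^ (N - m) * (J (N + 1) - J (m + 1))
        = q * L + q / (N + 1) - (1 - (1 - q) ^ (N + 1)) / (N + 1) := by
      have e1 : ∀ m ∈ range (N + 1),
          (N.choose m : ℝ) * q ^ (m + 1) * (1 - q) ^ (N - m) * (J (N + 1) - J (m + 1))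
          = q * ((N.choose m : ℝ) * q ^ m * (1 - q) ^ (N - m) * (J N - J m))
            + (q / (N + 1)) * ((N.choose m : ℝ) * q ^ m * (1 - q) ^ (N - m))
            - (N.choose m : ℝ) * q ^ (m + 1) * (1 - q) ^ (N - m) / (m + 1) := by
        intro m hm
        have hm1 : ((m : ℝ) + 1) ≠ 0 := by positivity
        have hN1 : ((N : ℝ) + 1) ≠ 0 := by positivity
        rw [J_succ, J_succ]
        field_simp
        ring
      rw [Finset.sum_congr rfl e1, Finset.sum_sub_distrib, Finset.sum_add_distrib,
        ← Finset.mul_sum, ← Finset.mul_sum, binom_one, mul_one, idII, hL]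
    have hsplit : ∑ m ∈ range (N + 1 + 1),
        ((N + 1).choose m : ℝ) * q ^ m * (1 - q) ^ (N + 1 - m) * (J (N + 1) - J m)
        = (∑ m ∈ range (N + 1),
            (N.choose m : ℝ) * q ^ (m + 1) * (1 - q) ^ (N - m) * (J (N + 1) - J (m + 1)))
          + ∑ m ∈ range (N + 1),
            (N.choose m : ℝ) * q ^ m * (1 - q) ^ (N + 1 - m) * (J (N + 1) - J m) := by
      rw [Finset.sum_range_succ' (fun m =>
        ((N + 1).choose m : ℝ) * q ^ m * (1 - q) ^ (N + 1 - m) * (J (N + 1) - J m)) (N + 1)]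
      have e1 : ∀ m ∈ range (N + 1),
          ((N + 1).choose (m + 1) : ℝ) * q ^ (m + 1) * (1 - q) ^ (N + 1 - (m + 1))
            * (J (N + 1) - J (m + 1))
          = (N.choose m : ℝ) * q ^ (m + 1) * (1 - q) ^ (N - m) * (J (N + 1) - J (m + 1))
            + (N.choose (m + 1) : ℝ) * q ^ (m + 1) * (1 - q) ^ (N - m)
              * (J (N + 1) - J (m + 1)) := by
        intro m _
        rw [Nat.choose_succ_succ, Nat.succ_sub_succ]
        push_cast
        ring
      rw [Finset.sum_congr rfl e1, Finset.sum_add_distrib]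
      have hS2 : ∑ m ∈ range (N + 1),
          (N.choose (m + 1) : ℝ) * q ^ (m + 1) * (1 - q) ^ (N - m) * (J (N + 1) - J (m + 1))
          + ((N + 1).choose 0 : ℝ) * q ^ 0 * (1 - q) ^ (N + 1 - 0) * (J (N + 1) - J 0)
          = ∑ m ∈ range (N + 1),
            (N.choose m : ℝ) * q ^ m * (1 - q) ^ (N + 1 - m) * (J (N + 1) - J m) := by
        rw [Finset.sum_range_succ' (fun m =>
          (N.choose m : ℝ) * q ^ m * (1 - q) ^ (N + 1 - m) * (J (N + 1) - J m)) N]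
        rw [Finset.sum_range_succ]
        simp only [Nat.choose_succ_self, Nat.cast_zero, zero_mul, add_zero,
          Nat.choose_zero_right, Nat.cast_one, one_mul, pow_zero, Nat.sub_zero,
          Nat.succ_sub_succ]
      linarith [hS2]
    rw [hsplit, hS1, hA, Finset.sum_range_succ, ih]
    have hN1 : ((N : ℝ) + 1) ≠ 0 := by positivity
    field_simp
    ring

lemma tsum_pi_prod_fin : ∀ (n : ℕ) (f : Fin n → ℕ+ → ℝ≥0∞),
    ∑' y : Fin n → ℕ+, ∏ i, f i (y i) = ∏ i, ∑' a, f i a := by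
  intro n
  induction n with
  | zero =>
    intro f
    rw [tsum_eq_single (fun i => i.elim0) (fun b hb => absurd (Subsingleton.elim b _) hb)]
    simp
  | succ n ih =>
    intro f
    rw [← (Fin.consEquiv (fun _ : Fin (n+1) => ℕ+)).tsum_eq]
    rw [ENNReal.tsum_prod']
    simp only [Fin.consEquiv_apply, Fin.prod_univ_succ, Fin.cons_zero, Fin.cons_succ]
    rw [tsum_congr (fun a => ENNReal.tsum_mul_left), ENNReal.tsum_mul_right,
      ih fun i => f i.succ]

lemma tsum_pi_prod {ι : Type*} [Fintype ι] (f : ι → ℕ+ → ℝ≥0∞) :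
    ∑' y : ι → ℕ+, ∏ i, f i (y i) = ∏ i, ∑' a, f i a := by
  classical
  let e := (Fintype.equivFin ι)
  have he := (Equiv.arrowCongr e (Equiv.refl ℕ+)).symm.tsum_eq
    (fun y : ι → ℕ+ => ∏ i, f i (y i))
  rw [← he]
  have : ∀ y : Fin (Fintype.card ι) → ℕ+,
      (fun y : ι → ℕ+ => ∏ i, f i (y i)) ((Equiv.arrowCongr e (Equiv.refl ℕ+)).symm y)
      = ∏ k : Fin (Fintype.card ι), f (e.symm k) (y k) := by
    intro y
    simp only [Equiv.arrowCongr_symm, Equiv.arrowCongr_apply, Equiv.refl_symm, Equiv.coe_refl,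
      Function.comp]
    exact Fintype.prod_equiv e _ _ (fun i => by simp)
  rw [tsum_congr this, tsum_pi_prod_fin]
  exact (Fintype.prod_equiv e _ _ (fun i => by simp)).symm

lemma tsum_count_binom {ι : Type*} [Fintype ι] [DecidableEq ι]
    (P : ℕ+ → ℝ≥0∞) (j : ℕ+) (g : ℕ → ℝ≥0∞) :
    ∑' y : ι → ℕ+, (∏ k, P (y k)) * g ((univ.filter fun k => y k = j).card)
    = ∑ m ∈ range (Fintype.card ι + 1),
        ((Fintype.card ι).choose m : ℝ≥0∞) * (P j) ^ m
          * (∑' a : ℕ+, if a = j then 0 else P a) ^ (Fintype.card ι - m) * g m := by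
  classical
  set r : ℝ≥0∞ := ∑' a : ℕ+, if a = j then 0 else P a with hr
  set h : Finset ι → ι → ℕ+ → ℝ≥0∞ :=
    fun S k a => if ((a = j) ↔ (k ∈ S)) then P a else 0 with hh
  have key : ∀ y : ι → ℕ+,
      (∏ k, P (y k)) * g ((univ.filter fun k => y k = j).card)
      = ∑ S : Finset ι, (∏ k, h S k (y k)) * g S.card := by
    intro y
    rw [Finset.sum_eq_single (univ.filter fun k => y k = j)]
    · congr 1
      apply Finset.prod_congr rfl
      intro k _
      rw [hh]
      simp only [mem_filter, mem_univ, true_and]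
      simp
    · intro S _ hS
      have : ∃ k, ¬((y k = j) ↔ (k ∈ S)) := by
        by_contra hc
        push_neg at hc
        exact hS (Finset.ext fun k => by simp [hc k])
      obtain ⟨k, hk⟩ := this
      rw [Finset.prod_eq_zero (Finset.mem_univ k) (by rw [hh]; exact if_neg hk), zero_mul]
    · intro h'; exact absurd (Finset.mem_univ _) h'
  rw [tsum_congr key, Summable.tsum_finsetSum (fun _ _ => ENNReal.summable)]
  have term : ∀ S : Finset ι,
      ∑' y : ι → ℕ+, (∏ k, h S k (y k)) * g S.card
      = (P j) ^ S.card * r ^ (Fintype.card ι - S.card) * g S.card := by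
    intro S
    rw [ENNReal.tsum_mul_right, tsum_pi_prod]
    congr 1
    have hsum : ∀ k, (∑' a, h S k a) = if k ∈ S then P j else r := by
      intro k
      by_cases hk : k ∈ S
      · rw [if_pos hk]
        rw [tsum_eq_single j]
        · rw [hh]; simp [hk]
        · intro b hb; rw [hh]; simp [hb, hk]
      · rw [if_neg hk, hr]
        apply tsum_congr
        intro a
        rw [hh]
        by_cases ha : a = j
        · simp [ha, hk]
        · simp [ha, hk]
    rw [Finset.prod_congr rfl (fun k _ => hsum k)]
    rw [← Finset.prod_filter_mul_prod_filter_not univ (· ∈ S)]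
    rw [Finset.prod_congr rfl (fun k hk => if_pos (mem_filter.1 hk).2),
      Finset.prod_congr rfl (fun k hk => if_neg (mem_filter.1 hk).2)]
    rw [Finset.prod_const, Finset.prod_const]
    have h1 : (univ.filter (· ∈ S)) = S := by ext k; simp
    have h2 : (univ.filter fun k => ¬ k ∈ S).card = Fintype.card ι - S.card := by
      rw [Finset.filter_not, Finset.card_sdiff_of_subset (Finset.filter_subset _ _), Finset.card_univ]
      congr 1
      exact congrArg Finset.card h1
    rw [h1, h2]
  rw [Finset.sum_congr rfl (fun S _ => term S)]
  rw [← Finset.sum_fiberwise_of_maps_to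
    (fun S _ => Finset.mem_range.2 (Nat.lt_succ_of_le (card_le_card (subset_univ S) |>.trans
      (le_of_eq Finset.card_univ))))
    (fun S => (P j) ^ S.card * r ^ (Fintype.card ι - S.card) * g S.card)]
  apply Finset.sum_congr rfl
  intro m hm
  rw [Finset.sum_congr rfl (fun S hS => by
    rw [(Finset.mem_filter.1 hS).2])]
  rw [Finset.sum_const, nsmul_eq_mul]
  have : (univ.filter fun S : Finset ι => S.card = m) = Finset.powersetCard m univ := by
    rw [Finset.powersetCard_eq_filter, Finset.powerset_univ]
  rw [this, Finset.card_powersetCard, Finset.card_univ]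
  ring

lemma tsum_ofReal_toReal {α : Type*} {f : α → ℝ} (hf : ∀ a, 0 ≤ f a)
    (h : (∑' a, ENNReal.ofReal (f a)) ≠ ⊤) :
    ∑' a, f a = (∑' a, ENNReal.ofReal (f a)).toReal := by
  rw [ENNReal.tsum_toReal_eq (fun a => ENNReal.ofReal_ne_top)]
  exact tsum_congr fun a => (ENNReal.toReal_ofReal (hf a)).symm

lemma EHhat_eq (p : ℕ+ → ℝ) (hp0 : ∀ j, 0 ≤ p j) (hsum : ∑' j, p j = 1)
    (N : ℕ) :
    EHhat p (N + 1) = ∑' j : ℕ+, p j * ∑ k ∈ range N, (1 - p j) ^ (k + 1) / (k + 1) := by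
  classical
  have hsummp : Summable p := by
    by_contra h
    rw [tsum_eq_zero_of_not_summable h] at hsum
    norm_num at hsum
  have hple : ∀ j, p j ≤ 1 := fun j =>
    hsum ▸ Summable.le_tsum hsummp j (fun k _ => hp0 k)
  set P : ℕ+ → ℝ≥0∞ := fun j => ENNReal.ofReal (p j) with hP
  have hP1 : ∑' j, P j = 1 := by
    rw [hP, ← ENNReal.ofReal_tsum_of_nonneg hp0 hsummp, hsum, ENNReal.ofReal_one]
  have hr : ∀ j, (∑' a : ℕ+, if a = j then 0 else P a) = ENNReal.ofReal (1 - p j) := by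
    intro j
    have hpt : ∀ a : ℕ+, P a = (if a = j then P a else 0) + (if a = j then 0 else P a) := by
      intro a; split_ifs <;> simp
    have hsplit : (∑' a : ℕ+, P a) = P j + ∑' a : ℕ+, if a = j then 0 else P a := by
      rw [tsum_congr hpt, ENNReal.tsum_add]
      congr 1
      rw [tsum_eq_single j (fun b hb => if_neg hb), if_pos rfl]
    have h1 : (∑' a : ℕ+, if a = j then 0 else P a) + P j = 1 := by
      rw [add_comm, ← hsplit, hP1]
    have := ENNReal.eq_sub_of_add_eq (by simp [hP]) h1
    rw [this, ENNReal.ofReal_sub 1 (hp0 j), ENNReal.ofReal_one]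
  -- counting facts
  have hmc1 : ∀ (x : Fin (N+1) → ℕ+) i, 1 ≤ mcount x i := by
    intro x i
    exact Finset.card_pos.2 ⟨i, by simp [mcount]⟩
  have hmcle : ∀ (x : Fin (N+1) → ℕ+) i, mcount x i ≤ N + 1 := by
    intro x i
    calc mcount x i ≤ (univ : Finset (Fin (N+1))).card := Finset.card_filter_le _ _
      _ = N + 1 := by simp
  have hJnn : ∀ (x : Fin (N+1) → ℕ+) i, 0 ≤ J N - J (mcount x i - 1) := by
    intro x i
    have : mcount x i - 1 ≤ N := by have := hmcle x i; omega
    linarith [J_mono this]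
  have hHhat_nonneg : ∀ x : Fin (N+1) → ℕ+, 0 ≤ Hhat x := by
    intro x
    apply mul_nonneg (by positivity)
    apply Finset.sum_nonneg
    intro i _
    have : (N + 1 : ℕ) - 1 = N := by omega
    rw [this]
    exact hJnn x i
  have hPn_nonneg : ∀ x : Fin (N+1) → ℕ+, 0 ≤ Pn p x := fun x =>
    Finset.prod_nonneg (fun k _ => hp0 _)
  set F : ℕ → ℝ≥0∞ := fun m => ENNReal.ofReal (J N - J m) with hF
  set c : ℝ≥0∞ := ENNReal.ofReal (((N : ℝ) + 1))⁻¹ with hc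
  -- pointwise identity
  have hpoint : ∀ x : Fin (N+1) → ℕ+,
      ENNReal.ofReal (Pn p x * Hhat x)
      = c * ∑ i, (∏ k, P (x k)) * F (mcount x i - 1) := by
    intro x
    rw [ENNReal.ofReal_mul (hPn_nonneg x)]
    have hH : ENNReal.ofReal (Hhat x) = c * ∑ i, F (mcount x i - 1) := by
      rw [Hhat]
      have hN1 : ((N + 1 : ℕ) : ℝ) = (N : ℝ) + 1 := by push_cast; ring
      have hsub : (N + 1 : ℕ) - 1 = N := by omega
      rw [hsub, hN1]
      rw [ENNReal.ofReal_mul (by positivity)]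
      rw [ENNReal.ofReal_sum_of_nonneg (fun i _ => hJnn x i)]
    rw [hH, Pn, ENNReal.ofReal_prod_of_nonneg (fun k _ => hp0 _)]
    simp only [Finset.mul_sum]
    exact Finset.sum_congr rfl fun i _ => by ring
  set V : ℝ≥0∞ := ∑' j : ℕ+, P j * ∑ m ∈ range (N + 1),
      (N.choose m : ℝ≥0∞) * (P j) ^ m * (ENNReal.ofReal (1 - p j)) ^ (N - m) * F m with hV
  have hAi : ∀ i : Fin (N + 1),
      (∑' x : Fin (N+1) → ℕ+, (∏ k, P (x k)) * F (mcount x i - 1)) = V := by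
    intro i
    set e := Equiv.funSplitAt i ℕ+ with he
    rw [← e.symm.tsum_eq (fun x => (∏ k, P (x k)) * F (mcount x i - 1))]
    rw [ENNReal.tsum_prod']
    have hx : ∀ (j : ℕ+) (y : {k : Fin (N+1) // k ≠ i} → ℕ+) (k : Fin (N+1)),
        e.symm (j, y) k = if h : k = i then j else y ⟨k, h⟩ := by
      intro j y k
      rw [he]
      simp [Equiv.funSplitAt_symm_apply]
    have hprod : ∀ (j : ℕ+) (y : {k : Fin (N+1) // k ≠ i} → ℕ+),
        (∏ k, P (e.symm (j, y) k)) = P j * ∏ s : {k : Fin (N+1) // k ≠ i}, P (y s) := by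
      intro j y
      rw [← Finset.mul_prod_erase univ (fun k => P (e.symm (j, y) k)) (Finset.mem_univ i)]
      congr 1
      · rw [hx]; simp
      · rw [Finset.prod_subtype (p := fun k => k ≠ i) (univ.erase i) (fun k => by simp)
          (fun k => P (e.symm (j, y) k))]
        apply Finset.prod_congr rfl
        intro s _
        rw [hx, dif_neg s.2]
    have hcount : ∀ (j : ℕ+) (y : {k : Fin (N+1) // k ≠ i} → ℕ+),
        mcount (e.symm (j, y)) i - 1
        = (univ.filter fun s : {k : Fin (N+1) // k ≠ i} => y s = j).card := by
      intro j y
      have hxi : e.symm (j, y) i = j := by rw [hx]; simp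
      have hkey : mcount (e.symm (j, y)) i
          = (univ.filter fun s : {k : Fin (N+1) // k ≠ i} => y s = j).card + 1 := by
        rw [mcount]
        set T := univ.filter fun k => e.symm (j, y) k = e.symm (j, y) i with hT
        have hiT : i ∈ T := by simp [hT]
        rw [← Finset.card_erase_add_one hiT]
        congr 1
        refine Finset.card_bij'
          (fun (k : Fin (N+1)) (hk : k ∈ T.erase i) => (⟨k, (Finset.mem_erase.1 hk).1⟩ :
            {k : Fin (N+1) // k ≠ i}))
          (fun s _ => s.1) ?_ ?_ ?_ ?_
        · intro k hk
          have h1 := (Finset.mem_erase.1 hk).1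
          have h2' := (Finset.mem_erase.1 hk).2
          rw [hT] at h2'
          have h2 := (Finset.mem_filter.1 h2').2
          rw [hxi] at h2
          simp only [Finset.mem_filter, Finset.mem_univ, true_and]
          rw [← h2, hx, dif_neg h1]
        · intro s hs
          have hys : y s = j := by simpa using hs
          apply Finset.mem_erase.2
          refine ⟨s.2, ?_⟩
          rw [hT]
          refine Finset.mem_filter.2 ⟨Finset.mem_univ _, ?_⟩
          rw [hxi, hx, dif_neg s.2]
          simpa using hys
        · intro k hk; rfl
        · intro s hs; rfl
      omega
    have hpt : ∀ (j : ℕ+) (y : {k : Fin (N+1) // k ≠ i} → ℕ+),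
        (∏ k, P (e.symm (j, y) k)) * F (mcount (e.symm (j, y)) i - 1)
        = P j * ((∏ s : {k : Fin (N+1) // k ≠ i}, P (y s))
            * F ((univ.filter fun s : {k : Fin (N+1) // k ≠ i} => y s = j).card)) := by
      intro j y
      rw [hprod, hcount]
      ring
    rw [tsum_congr (fun j => tsum_congr (fun y => hpt j y))]
    have hcard : Fintype.card {k : Fin (N+1) // k ≠ i} = N := by
      have h1 := Fintype.card_subtype_compl (fun k : Fin (N+1) => k = i)
      simp only [Fintype.card_subtype_eq, Fintype.card_fin] at h1
      simpa [Ne] using h1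
    rw [hV]
    apply tsum_congr
    intro j
    rw [ENNReal.tsum_mul_left]
    congr 1
    rw [tsum_count_binom P j F, hcard, hr j]
  -- sum the identical coordinate contributions
  have hE : (∑' x : Fin (N+1) → ℕ+, ENNReal.ofReal (Pn p x * Hhat x)) = V := by
    rw [tsum_congr hpoint, ENNReal.tsum_mul_left, Summable.tsum_finsetSum (fun i _ => ENNReal.summable)]
    rw [Finset.sum_congr rfl (fun i _ => hAi i)]
    rw [Finset.sum_const, Finset.card_univ, Fintype.card_fin, nsmul_eq_mul, ← mul_assoc]
    have hc1 : c * ((N + 1 : ℕ) : ℝ≥0∞) = 1 := by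
      rw [hc, ENNReal.ofReal_inv_of_pos (by positivity)]
      have h2 : ENNReal.ofReal ((N : ℝ) + 1) = ((N + 1 : ℕ) : ℝ≥0∞) := by
        rw [show ((N : ℝ) + 1) = ((N + 1 : ℕ) : ℝ) by push_cast; ring, ENNReal.ofReal_natCast]
      rw [h2]
      exact ENNReal.inv_mul_cancel (by simp) (by simp)
    rw [hc1, one_mul]
  -- identify V with the real-valued sum
  set S : ℕ+ → ℝ := fun j => p j * ∑ k ∈ range N, (1 - p j) ^ (k + 1) / (k + 1) with hS
  have hSnn : ∀ j, 0 ≤ S j := by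
    intro j
    apply mul_nonneg (hp0 j)
    apply Finset.sum_nonneg
    intro k _
    have h1 := hple j
    exact div_nonneg (pow_nonneg (by linarith) _) (by positivity)
  have hSle : ∀ j, S j ≤ (N : ℝ) * p j := by
    intro j
    have h1 : ∑ k ∈ range N, (1 - p j) ^ (k + 1) / (k + 1) ≤ ∑ k ∈ range N, (1 : ℝ) := by
      apply Finset.sum_le_sum
      intro k _
      rw [div_le_one (by positivity)]
      have h2 : (1 - p j) ^ (k + 1) ≤ 1 := by
        apply pow_le_one₀ (by linarith [hple j]) (by linarith [hp0 j])
      have : (1 : ℝ) ≤ (k : ℝ) + 1 := by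
        have := Nat.cast_nonneg (α := ℝ) k
        linarith
      linarith
    rw [Finset.sum_const, Finset.card_range, nsmul_eq_mul, mul_one] at h1
    calc S j ≤ p j * (N : ℝ) := by
          apply mul_le_mul_of_nonneg_left h1 (hp0 j)
      _ = (N : ℝ) * p j := by ring
  have hSsummable : Summable S :=
    Summable.of_nonneg_of_le hSnn hSle (hsummp.mul_left _)
  have hVreal : V = ENNReal.ofReal (∑' j, S j) := by
    rw [ENNReal.ofReal_tsum_of_nonneg hSnn hSsummable, hV]
    apply tsum_congr
    intro j
    have hid : S j = p j * ∑ m ∈ range (N + 1),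
        (N.choose m : ℝ) * (p j) ^ m * (1 - p j) ^ (N - m) * (J N - J m) := by
      rw [hS, idI (p j) N]
    rw [hid, ENNReal.ofReal_mul (hp0 j)]
    congr 1
    rw [ENNReal.ofReal_sum_of_nonneg (fun m hm => by
      have h1 := hp0 j
      have h2 : (0:ℝ) ≤ 1 - p j := by linarith [hple j]
      have h3 : 0 ≤ J N - J m := by
        have : m ≤ N := Nat.lt_succ_iff.1 (Finset.mem_range.1 hm)
        linarith [J_mono this]
      positivity)]
    apply Finset.sum_congr rfl
    intro m hm
    have h1 := hp0 j
    have h2 : (0:ℝ) ≤ 1 - p j := by linarith [hple j]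
    have h3 : 0 ≤ J N - J m := by
      have : m ≤ N := Nat.lt_succ_iff.1 (Finset.mem_range.1 hm)
      linarith [J_mono this]
    rw [ENNReal.ofReal_mul (by positivity), ENNReal.ofReal_mul (by positivity),
      ENNReal.ofReal_mul (by positivity), ENNReal.ofReal_pow h1, ENNReal.ofReal_pow h2,
      ENNReal.ofReal_natCast]
  rw [EHhat]
  rw [tsum_ofReal_toReal (fun x => mul_nonneg (hPn_nonneg x) (hHhat_nonneg x))
    (by rw [hE, hVreal]; exact ENNReal.ofReal_ne_top)]
  rw [hE, hVreal, ENNReal.toReal_ofReal (tsum_nonneg hSnn)]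

end Aux

theorem harmonic_estimator_bias_formula (p : ℕ+ → ℝ)
    (hp0 : ∀ j, 0 ≤ p j) (hsum : ∑' j, p j = 1)
    (hH : Summable fun j : ℕ+ => p j * Real.log (p j))
    (n : ℕ) (hn : 1 ≤ n) :
    EHhat p n - Hent p
      = -∑' i : ℕ, (1 / (n + i : ℝ)) * ∑' j : ℕ+, p j * (1 - p j) ^ (n + i) := by
  classical
  obtain ⟨N, rfl⟩ : ∃ N, n = N + 1 := ⟨n - 1, by omega⟩
  have hsummp : Summable p := by
    by_contra h
    rw [tsum_eq_zero_of_not_summable h] at hsum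
    norm_num at hsum
  have hple : ∀ j, p j ≤ 1 := fun j => hsum ▸ Summable.le_tsum hsummp j (fun k _ => hp0 k)
  set Sfin : ℕ+ → ℝ := fun j => ∑ k ∈ range N, (1 - p j) ^ (k + 1) / (k + 1) with hSfin
  set f : ℕ+ → ℕ → ℝ := fun j k => (1 - p j) ^ (k + 1) / ((k : ℝ) + 1) with hf
  set Tl : ℕ+ → ℝ := fun j => ∑' i : ℕ, f j (i + N) with hTl
  -- the logarithm series
  have hlog : ∀ j, 0 < p j → HasSum (f j) (-Real.log (p j)) := by
    intro j hpj
    have habs : |1 - p j| < 1 := by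
      rw [abs_lt]
      constructor <;> [linarith [hple j]; linarith]
    have h1 := Real.hasSum_pow_div_log_of_abs_lt_one habs
    have h2 : (1 : ℝ) - (1 - p j) = p j := by ring
    rw [h2] at h1
    convert h1 using 2 with k
  have hsmf : ∀ j, 0 < p j → Summable (f j) := fun j hj => (hlog j hj).summable
  -- per-symbol tail identity
  have hkey : ∀ j, p j * Sfin j + p j * Real.log (p j) = -(p j * Tl j) := by
    intro j
    rcases eq_or_lt_of_le (hp0 j) with h0 | hpos
    · rw [← h0]; simp
    · have h1 := hlog j hpos
      have h2 := Summable.sum_add_tsum_nat_add (f := f j) N (hsmf j hpos)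
      rw [h1.tsum_eq] at h2
      have h3 : Sfin j + Tl j = -Real.log (p j) := by
        rw [← h2]
      linear_combination (p j) * h3
  -- summability facts
  have hSfin_nn : ∀ j, 0 ≤ Sfin j := by
    intro j
    apply Finset.sum_nonneg
    intro k _
    have h1 := hple j
    exact div_nonneg (pow_nonneg (by linarith) _) (by positivity)
  have hSfin_le : ∀ j, Sfin j ≤ (N : ℝ) := by
    intro j
    have h1 : ∀ k ∈ range N, (1 - p j) ^ (k + 1) / ((k : ℝ) + 1) ≤ 1 := by
      intro k _
      rw [div_le_one (by positivity)]
      have h2 : (1 - p j) ^ (k + 1) ≤ 1 :=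
        pow_le_one₀ (by linarith [hple j]) (by linarith [hp0 j])
      have : (0 : ℝ) ≤ (k : ℝ) := Nat.cast_nonneg k
      linarith
    calc Sfin j ≤ ∑ k ∈ range N, (1 : ℝ) := Finset.sum_le_sum h1
      _ = (N : ℝ) := by simp
  have hS1 : Summable (fun j => p j * Sfin j) := by
    apply Summable.of_nonneg_of_le (fun j => mul_nonneg (hp0 j) (hSfin_nn j))
      (fun j => ?_) (hsummp.mul_left (N : ℝ))
    calc p j * Sfin j ≤ p j * (N : ℝ) :=
          mul_le_mul_of_nonneg_left (hSfin_le j) (hp0 j)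
      _ = (N : ℝ) * p j := by ring
  have hT : Summable (fun j => p j * Tl j) := by
    have he : (fun j => p j * Tl j)
        = fun j => -(p j * Sfin j + p j * Real.log (p j)) := by
      funext j
      have := hkey j
      linarith
    rw [he]
    exact ((hS1.add hH).neg)
  have hTl_nn : ∀ j, 0 ≤ Tl j := by
    intro j
    apply tsum_nonneg
    intro i
    simp only [hf]
    have h1 := hple j
    exact div_nonneg (pow_nonneg (by linarith) _) (by positivity)
  -- step 3 : bias = - sum of tails
  have hstep3 : EHhat p (N + 1) - Hent p = -∑' j, p j * Tl j := by
    rw [EHhat_eq p hp0 hsum N, Hent, sub_neg_eq_add, ← Summable.tsum_add hS1 hH,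
      tsum_congr hkey, tsum_neg]
  -- step 4 : Tonelli swap
  set D : ℕ+ → ℕ → ℝ≥0∞ := fun j i => ENNReal.ofReal (p j * f j (i + N)) with hD
  have hswap : (∑' j, ∑' i, D j i) = ∑' i, ∑' j, D j i := ENNReal.tsum_comm
  have ha : ∀ j, (∑' i, D j i) = ENNReal.ofReal (p j * Tl j) := by
    intro j
    rcases eq_or_lt_of_le (hp0 j) with h0 | hpos
    · rw [hD]
      simp [← h0]
    · have hsm2 : Summable (fun i : ℕ => p j * f j (i + N)) :=
        (((summable_nat_add_iff N).2 (hsmf j hpos)).mul_left (p j))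
      have hnn : ∀ i : ℕ, 0 ≤ p j * f j (i + N) := by
        intro i
        apply mul_nonneg (hp0 j)
        simp only [hf]
        have h1 := hple j
        exact div_nonneg (pow_nonneg (by linarith) _) (by positivity)
      rw [hD, ← ENNReal.ofReal_tsum_of_nonneg hnn hsm2, tsum_mul_left]
  have hSi : ∀ K : ℕ, Summable (fun j : ℕ+ => p j * (1 - p j) ^ K) := by
    intro K
    apply Summable.of_nonneg_of_le (fun j => ?_) (fun j => ?_) hsummp
    · have h1 := hple j
      exact mul_nonneg (hp0 j) (pow_nonneg (by linarith) _)
    · have h1 := hple j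
      have h2 : (1 - p j) ^ K ≤ 1 := pow_le_one₀ (by linarith) (by linarith [hp0 j])
      calc p j * (1 - p j) ^ K ≤ p j * 1 := mul_le_mul_of_nonneg_left h2 (hp0 j)
        _ = p j := by ring
  have hb : ∀ i : ℕ, (∑' j, D j i)
      = ENNReal.ofReal ((1 / ((N : ℝ) + 1 + i)) * ∑' j, p j * (1 - p j) ^ (N + 1 + i)) := by
    intro i
    have hc : ((N : ℝ) + 1 + i) ≠ 0 := by positivity
    have hpt : ∀ j, p j * f j (i + N)
        = (1 / ((N : ℝ) + 1 + i)) * (p j * (1 - p j) ^ (N + 1 + i)) := by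
      intro j
      simp only [hf]
      have he : i + N + 1 = N + 1 + i := by omega
      rw [he]
      have he2 : ((i + N : ℕ) : ℝ) + 1 = (N : ℝ) + 1 + i := by push_cast; ring
      rw [he2]
      field_simp
    have hnn : ∀ j, 0 ≤ (1 / ((N : ℝ) + 1 + i)) * (p j * (1 - p j) ^ (N + 1 + i)) := by
      intro j
      have h1 := hple j
      have h2 := hp0 j
      apply mul_nonneg (by positivity)
      exact mul_nonneg h2 (pow_nonneg (by linarith) _)
    have hsm3 : Summable (fun j : ℕ+ =>
        (1 / ((N : ℝ) + 1 + i)) * (p j * (1 - p j) ^ (N + 1 + i))) :=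
      (hSi (N + 1 + i)).mul_left _
    rw [hD]
    rw [tsum_congr (fun j => congrArg ENNReal.ofReal (hpt j))]
    rw [← ENNReal.ofReal_tsum_of_nonneg hnn hsm3, tsum_mul_left]
  have hfin : (∑' j, ∑' i, D j i) ≠ ⊤ := by
    rw [tsum_congr ha, ← ENNReal.ofReal_tsum_of_nonneg
      (fun j => mul_nonneg (hp0 j) (hTl_nn j)) hT]
    exact ENNReal.ofReal_ne_top
  have hstep4 : (∑' j, p j * Tl j)
      = ∑' i : ℕ, (1 / ((N : ℝ) + 1 + i)) * ∑' j, p j * (1 - p j) ^ (N + 1 + i) := by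
    have hL : (∑' j, ∑' i, D j i) = ENNReal.ofReal (∑' j, p j * Tl j) := by
      rw [tsum_congr ha, ← ENNReal.ofReal_tsum_of_nonneg
        (fun j => mul_nonneg (hp0 j) (hTl_nn j)) hT]
    have hR : (∑' i : ℕ, ∑' j, D j i)
        = ∑' i : ℕ, ENNReal.ofReal
            ((1 / ((N : ℝ) + 1 + i)) * ∑' j, p j * (1 - p j) ^ (N + 1 + i)) :=
      tsum_congr hb
    have hRnn : ∀ i : ℕ, 0 ≤ (1 / ((N : ℝ) + 1 + i)) * ∑' j, p j * (1 - p j) ^ (N + 1 + i) := by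
      intro i
      apply mul_nonneg (by positivity)
      apply tsum_nonneg
      intro j
      have h1 := hple j
      exact mul_nonneg (hp0 j) (pow_nonneg (by linarith) _)
    rw [tsum_ofReal_toReal hRnn (by rw [← hR, ← hswap]; exact hfin)]
    rw [← hR, ← hswap, hL, ENNReal.toReal_ofReal (tsum_nonneg
      (fun j => mul_nonneg (hp0 j) (hTl_nn j)))]
  rw [hstep3, hstep4]
  congr 1
  apply tsum_congr
  intro i
  congr 2
  push_cast
  ring
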